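/- Let k ≥ 1 be an integer and a = (a₀,…,a_{k−1}) ∈ {±1}^k. Then a_j · cos(3^j θ_{a,3}) ≥ 3^{−(k−1)} for every j = 0, 1, …, k−1; in particular |cos(3^j θ_{a,3})|^{−1} ≤ 3^{k−1}. -/

import Mathlib

open Real

noncomputable section

abbrev SL2 := Matrix.SpecialLinearGroup (Fin 2) ℝ

/-- inverse hyperbolic cosine -/
def acosh (x : ℝ) : ℝ := Real.log (x + Real.sqrt (x ^ 2 - 1))

/-- the "pseudo-distance from the origin" ‖g‖ = arcosh((g₁₁²+g₁₂²+g₂₁²+g₂₂²)/2) -/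
def gnorm (g : SL2) : ℝ :=
  acosh ((g.1 0 0 ^ 2 + g.1 0 1 ^ 2 + g.1 1 0 ^ 2 + g.1 1 1 ^ 2) / 2)

def z1 (x : SL2) : ℂ :=
  (((x.1 0 0 + x.1 1 1 : ℝ) : ℂ) + Complex.I * ((x.1 1 0 - x.1 0 1 : ℝ) : ℂ)) / 2

def z2 (x : SL2) : ℂ :=
  (((x.1 0 1 + x.1 1 0 : ℝ) : ℂ) + Complex.I * ((x.1 0 0 - x.1 1 1 : ℝ) : ℂ)) / 2

/-- the spherical function ψ_{m,k}(x) = z₁(x)^{-(k+2m)} z₂(x)^k -/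
def psi (m k : ℕ) (x : SL2) : ℂ := z1 x ^ (-(k + 2 * m : ℤ)) * z2 x ^ k

/-- γ is central iff both components are ±1 -/
def IsCentral (γ : SL2 × SL2) : Prop :=
  (γ.1.1 = 1 ∨ γ.1.1 = -1) ∧ (γ.2.1 = 1 ∨ γ.2.1 = -1)

/-- ε_Γ -/
def epsGamma (Γ : Set (SL2 × SL2)) : ℝ :=
  (1 / 3) * sInf {r | ∃ γ ∈ Γ, ¬IsCentral γ ∧ r = |gnorm γ.1 - gnorm γ.2|}

/-- the set counted by N_Γ(x,R) -/
def orbitSet (Γ : Set (SL2 × SL2)) (x : SL2) (R : ℝ) : Set (SL2 × SL2) :=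
  {γ | γ ∈ Γ ∧ gnorm (γ.1 * x * γ.2⁻¹) ≤ R}

/-- the constant m(C,α,ε,s) -/
def mConst (C α ε : ℝ) (s : ℕ) : ℝ :=
  (Real.log 2 * s + 2 * α * ε + Real.log (1 + 2 ^ s * C * Real.exp (6 * α * ε))) /
    Real.log (Real.cosh ε)

def chi (x : ℝ) : ℝ := if x = 1 then 0 else 1

/-- θ_{a,N} for a tuple a of length k (with the convention a_{-1} = 1) -/
def thetaAN (a : ℕ → ℝ) (k : ℕ) (N : ℝ) : ℝ :=
  Real.pi * ∑ i ∈ Finset.range k,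
    (chi (a i) - if i = 0 then 0 else chi (a (i - 1))) * N ^ (-(i : ℤ))

/-- the sign tuple a(b) attached to b -/
def signOf (b : ℕ → ℝ) (j : ℕ) : ℝ := if 0 ≤ b j then 1 else -1

/-- ψ_{m,b} = Σ_{j<k} b_j ψ_{m,3^j} -/
def psiB (m k : ℕ) (b : ℕ → ℝ) (x : SL2) : ℂ :=
  ∑ j ∈ Finset.range k, (b j : ℂ) * psi m (3 ^ j) x

/-- f_b(u) = Σ_{j<k} b_j cos(3^j θ_{a(b),3}) u^{3^j} -/
def fb (k : ℕ) (b : ℕ → ℝ) (u : ℝ) : ℝ :=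
  ∑ j ∈ Finset.range k, b j * Real.cos (3 ^ j * thetaAN (signOf b) k 3) * u ^ 3 ^ j

/-- the rotation matrix k(θ) -/
def kMat (θ : ℝ) : SL2 :=
  ⟨!![Real.cos θ, -Real.sin θ; Real.sin θ, Real.cos θ], by
    simp [Matrix.det_fin_two_of]
    nlinarith [Real.sin_sq_add_cos_sq θ]⟩

/-- the diagonal matrix a(t) -/
def aMat (t : ℝ) : SL2 :=
  ⟨!![Real.exp t, 0; 0, Real.exp (-t)], by
    simp [Matrix.det_fin_two_of, ← Real.exp_add]⟩

end
private noncomputable def chiZ (a : ℕ → ℝ) (i : ℕ) : ℤ := if a i = 1 then 0 else 1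

private noncomputable def nInt (a : ℕ → ℝ) (i : ℕ) : ℤ :=
  chiZ a i - if i = 0 then 0 else chiZ a (i - 1)

private lemma nInt_cast (a : ℕ → ℝ) (i : ℕ) :
    (nInt a i : ℝ) = chi (a i) - if i = 0 then 0 else chi (a (i - 1)) := by
  unfold nInt chiZ chi
  split_ifs <;> push_cast <;> ring

private lemma nInt_abs_le (a : ℕ → ℝ) (i : ℕ) : |nInt a i| ≤ 1 := by
  unfold nInt chiZ; split_ifs <;> decide

private lemma sum_nInt (a : ℕ → ℝ) (j : ℕ) :
    ∑ i ∈ Finset.range (j + 1), nInt a i = chiZ a j := by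
  have h := Finset.sum_range_sub (fun i => if i = 0 then 0 else chiZ a (i - 1)) (j + 1)
  simp only [Nat.add_sub_cancel, if_neg (Nat.succ_ne_zero _)] at h
  unfold nInt
  rw [h]
  simp

private lemma neg_one_zpow_congr {M S : ℤ} (h : Even (M - S)) :
    ((-1 : ℝ)) ^ M = (-1 : ℝ) ^ S := by
  have hM : M = S + (M - S) := by ring
  rw [hM, zpow_add₀ (by norm_num : (-1 : ℝ) ≠ 0), h.neg_one_zpow, mul_one]

private lemma geom3 (d : ℕ) :
    ∑ t ∈ Finset.range d, ((3 : ℝ)⁻¹) ^ (t + 1) = (1 - (3 : ℝ)⁻¹ ^ d) / 2 := by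
  induction d with
  | zero => simp
  | succ n ih =>
    rw [Finset.sum_range_succ, ih, pow_succ]
    ring


theorem stmt6 (k : ℕ) (hk : 1 ≤ k) (a : ℕ → ℝ) (ha : ∀ j < k, a j = 1 ∨ a j = -1) :
    ∀ j < k,
      ((3 : ℝ) ^ (k - 1))⁻¹ ≤ a j * Real.cos ((3 : ℝ) ^ j * thetaAN a k 3) ∧
      |Real.cos ((3 : ℝ) ^ j * thetaAN a k 3)|⁻¹ ≤ (3 : ℝ) ^ (k - 1) := by
  intro j hj
  have h3 : (0 : ℝ) < 3 := by norm_num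
  have hπ := Real.pi_pos
  set M : ℤ := ∑ i ∈ Finset.range (j + 1), nInt a i * 3 ^ (j - i) with hMdef
  set r : ℝ := ∑ i ∈ Finset.Ico (j + 1) k, (nInt a i : ℝ) * (3 : ℝ) ^ ((j : ℤ) - i) with hrdef
  -- Step 1: split 3^j θ
  have hsplit : (3 : ℝ) ^ j * thetaAN a k 3 = (M : ℝ) * π + π * r := by
    have e0 : (3 : ℝ) ^ j * thetaAN a k 3 =
        π * ∑ i ∈ Finset.range k, (nInt a i : ℝ) * (3 : ℝ) ^ ((j : ℤ) - i) := by
      unfold thetaAN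
      simp only [Finset.mul_sum]
      refine Finset.sum_congr rfl fun i _ => ?_
      have hz : ((3:ℝ)) ^ j * (3:ℝ) ^ (-(i:ℤ)) = (3:ℝ) ^ ((j:ℤ) - i) := by
        rw [← zpow_natCast (3:ℝ) j, ← zpow_add₀ (by norm_num : (3:ℝ) ≠ 0), sub_eq_add_neg]
      rw [nInt_cast, ← hz]
      ring
    have e1 : ∑ i ∈ Finset.range k, (nInt a i : ℝ) * (3 : ℝ) ^ ((j : ℤ) - i) =
        (M : ℝ) + r := by
      rw [← Finset.sum_range_add_sum_Ico _ (show j + 1 ≤ k from hj), ← hrdef]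
      congr 1
      rw [hMdef]
      push_cast
      refine Finset.sum_congr rfl fun i hi => ?_
      have hij : i ≤ j := Nat.lt_succ_iff.mp (Finset.mem_range.mp hi)
      rw [show ((j:ℤ) - i) = ((j - i : ℕ) : ℤ) by omega, zpow_natCast]
    rw [e0, e1]; ring
  -- Step 2: cosine via integer shift
  have hcos : Real.cos ((3 : ℝ) ^ j * thetaAN a k 3) = (-1 : ℝ) ^ M * Real.cos (π * r) := by
    rw [hsplit, show (M : ℝ) * π + π * r = (M : ℝ) * π - -(π * r) by ring,
      Real.cos_int_mul_pi_sub, Real.cos_neg]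
  -- Step 3: sign
  have hsign : ((-1 : ℝ)) ^ M = a j := by
    have hpar : Even (M - chiZ a j) := by
      rw [← sum_nInt a j, hMdef, ← Finset.sum_sub_distrib]
      refine Finset.even_sum _ fun i _ => ?_
      rw [show nInt a i * 3 ^ (j - i) - nInt a i = nInt a i * (3 ^ (j - i) - 1) by ring]
      exact (((by decide : Odd (3:ℤ)).pow).sub_odd odd_one).mul_left _
    rw [neg_one_zpow_congr hpar]
    rcases ha j hj with h1 | h1 <;> simp [chiZ, h1] <;> norm_num
  -- Step 4: bound on r
  set e : ℝ := (3 : ℝ)⁻¹ ^ (k - (j + 1)) with hedef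
  have he0 : 0 < e := by positivity
  have he1 : e ≤ 1 := pow_le_one₀ (by norm_num) (by norm_num)
  have habs : |r| ≤ (1 - e) / 2 := by
    calc |r| ≤ ∑ i ∈ Finset.Ico (j + 1) k, |(nInt a i : ℝ) * (3 : ℝ) ^ ((j : ℤ) - i)| :=
          Finset.abs_sum_le_sum_abs _ _
    _ ≤ ∑ i ∈ Finset.Ico (j + 1) k, (3 : ℝ) ^ ((j : ℤ) - i) := by
          refine Finset.sum_le_sum fun i _ => ?_
          rw [abs_mul, abs_of_pos (zpow_pos h3 _)]
          have h1 : |(nInt a i : ℝ)| ≤ 1 := by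
            rw [← Int.cast_abs]
            exact_mod_cast nInt_abs_le a i
          nlinarith [zpow_pos h3 ((j:ℤ) - i), abs_nonneg ((nInt a i : ℝ))]
    _ = ∑ t ∈ Finset.range (k - (j + 1)), ((3 : ℝ)⁻¹) ^ (t + 1) := by
          rw [Finset.sum_Ico_eq_sum_range]
          refine Finset.sum_congr rfl fun t _ => ?_
          rw [show ((j:ℤ) - (j + 1 + t : ℕ)) = -(((t + 1 : ℕ) : ℤ)) by push_cast; ring,
            zpow_neg, zpow_natCast, ← inv_pow]
    _ = (1 - e) / 2 := geom3 _
  -- Step 5: lower bound for cos (π r)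
  have hcosr : e ≤ Real.cos (π * r) := by
    have h1 : |π * r| ≤ π / 2 * (1 - e) := by
      rw [abs_mul, abs_of_pos hπ]
      nlinarith [habs]
    have h2 : Real.cos (π / 2 * (1 - e)) ≤ Real.cos |π * r| :=
      Real.cos_le_cos_of_nonneg_of_le_pi (abs_nonneg _) (by nlinarith) h1
    have h4 : Real.cos (π / 2 * (1 - e)) = Real.sin (π / 2 * e) := by
      rw [show π / 2 * (1 - e) = π / 2 - π / 2 * e by ring, Real.cos_pi_div_two_sub]
    have h5 : e ≤ Real.sin (π / 2 * e) := by
      have h6 := Real.mul_le_sin (x := π / 2 * e) (by positivity) (by nlinarith)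
      have h7 : 2 / π * (π / 2 * e) = e := by field_simp
      linarith [h7 ▸ h6]
    have h8 : Real.cos |π * r| = Real.cos (π * r) := Real.cos_abs _
    linarith
  -- Step 6: assemble
  have hee : ((3 : ℝ) ^ (k - 1))⁻¹ ≤ e := by
    rw [hedef, ← inv_pow]
    exact pow_le_pow_of_le_one (by norm_num) (by norm_num) (by omega)
  have hfirst : ((3 : ℝ) ^ (k - 1))⁻¹ ≤ a j * Real.cos ((3 : ℝ) ^ j * thetaAN a k 3) := by
    have haj : a j * a j = 1 := by rcases ha j hj with h | h <;> rw [h] <;> norm_num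
    rw [hcos, hsign, ← mul_assoc, haj, one_mul]
    exact hee.trans hcosr
  refine ⟨hfirst, ?_⟩
  have hpos : (0 : ℝ) < ((3 : ℝ) ^ (k - 1))⁻¹ := by positivity
  have habs' : ((3 : ℝ) ^ (k - 1))⁻¹ ≤ |Real.cos ((3 : ℝ) ^ j * thetaAN a k 3)| := by
    rcases ha j hj with h | h
    · refine hfirst.trans ?_
      rw [h, one_mul]
      exact le_abs_self _
    · refine hfirst.trans ?_
      rw [h]
      rw [show (-1 : ℝ) * Real.cos ((3 : ℝ) ^ j * thetaAN a k 3) =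
        -(Real.cos ((3 : ℝ) ^ j * thetaAN a k 3)) by ring]
      exact neg_le_abs _
  calc |Real.cos ((3 : ℝ) ^ j * thetaAN a k 3)|⁻¹
      ≤ (((3 : ℝ) ^ (k - 1))⁻¹)⁻¹ := inv_anti₀ hpos habs'
    _ = (3 : ℝ) ^ (k - 1) := inv_inv _
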